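/- For any nonempty open interval I ⊆ ℝ and any function φ : I → ℝ that is twice differentiable on I, φ satisfies both (E1) and (E2) at every point of I if and only if φ satisfies both (E1) and (E3) at every point of I. -/

import Mathlib

/-- On any nonempty open interval, the systems {(E1),(E2)} and
{(E1),(E3)} have identical solution sets. -/
theorem stmt_4 (b c κ e ε : ℝ) (hε : ε = 1 ∨ ε = -1)
    (m : ℤ) (hm : 2 ≤ m)
    (I : Set ℝ) (hIopen : IsOpen I) (hIne : I.Nonempty) (hIconn : I.OrdConnected)
    (φ : ℝ → ℝ)
    (hφ : ∀ τ ∈ I, DifferentiableAt ℝ φ τ)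
    (hφ' : ∀ τ ∈ I, DifferentiableAt ℝ (deriv φ) τ) :
    (∀ τ ∈ I,
      (τ^2 * (τ-c)^2 * deriv (deriv φ) τ
          + (τ-c) * ((m:ℝ)*τ^2 - (τ-c)*(2*((m:ℝ)-1)*τ - b)) * deriv φ τ
          - (m:ℝ)*τ^2 * φ τ = -ε*κ*τ^2/2) ∧
      (-τ^3*(τ-c) * deriv (deriv φ) τ
          + ((2*(m:ℝ)*τ - b)*τ*(τ-c) - ((m:ℝ)+1)*τ^3) * deriv φ τ
          + (2*(2*(m:ℝ)-1)*τ^2 - b*τ + 2*(τ-c)*(b - (2*(m:ℝ)-1)*τ)) * φ τ = e*τ))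
    ↔
    (∀ τ ∈ I,
      (τ^2 * (τ-c)^2 * deriv (deriv φ) τ
          + (τ-c) * ((m:ℝ)*τ^2 - (τ-c)*(2*((m:ℝ)-1)*τ - b)) * deriv φ τ
          - (m:ℝ)*τ^2 * φ τ = -ε*κ*τ^2/2) ∧
      (τ^2*(τ-c)*(τ-2*c) * deriv φ τ
          + (-(m:ℝ)*τ^3 + (2*(2*(m:ℝ)-1)*c + b)*τ^2
              - (2*(2*(m:ℝ)-1)*c^2 + 3*b*c)*τ + 2*b*c^2) * φ τ
          = -ε*κ*τ^3/2 + e*τ*(τ-c))) := by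
  constructor
  · intro h τ hτ
    obtain ⟨h1, h2⟩ := h τ hτ
    exact ⟨h1, by linear_combination τ * h1 + (τ - c) * h2⟩
  · intro h τ hτ
    obtain ⟨h1, h3⟩ := h τ hτ
    refine ⟨h1, ?_⟩
    by_cases hτc : τ = c
    · -- at τ = c use the derivative of (E3) at c
      subst hτc
      -- now c has been replaced by τ everywhere; τ plays the role of c
      set F : ℝ → ℝ := fun x =>
        x^2*(x-τ)*(x-2*τ) * deriv φ x
          + (-(m:ℝ)*x^3 + (2*(2*(m:ℝ)-1)*τ + b)*x^2
              - (2*(2*(m:ℝ)-1)*τ^2 + 3*b*τ)*x + 2*b*τ^2) * φ x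
          - (-ε*κ*x^3/2 + e*x*(x-τ)) with hF
      have hFz : F =ᶠ[nhds τ] fun _ => 0 := by
        filter_upwards [hIopen.mem_nhds hτ] with x hx
        have hx2 := (h x hx).2
        simp only [hF]
        linarith [hx2]
      have hderiv0 : deriv F τ = 0 := by
        rw [hFz.deriv_eq]
        simp
      have hφd : HasDerivAt φ (deriv φ τ) τ := (hφ τ hτ).hasDerivAt
      have hφ'd : HasDerivAt (deriv φ) (deriv (deriv φ) τ) τ := (hφ' τ hτ).hasDerivAt
      have hAd := ((hasDerivAt_pow 2 τ).mul ((hasDerivAt_id τ).sub_const τ)).mul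
          ((hasDerivAt_id τ).sub_const (2*τ))
      have hPd := ((((hasDerivAt_pow 3 τ).const_mul (-(m:ℝ))).add
          ((hasDerivAt_pow 2 τ).const_mul (2*(2*(m:ℝ)-1)*τ + b))).sub
          ((hasDerivAt_id τ).const_mul (2*(2*(m:ℝ)-1)*τ^2 + 3*b*τ))).add_const (2*b*τ^2)
      have hRd := (((hasDerivAt_pow 3 τ).const_mul (-ε*κ)).div_const 2).add
          ((((hasDerivAt_id τ).const_mul e).mul ((hasDerivAt_id τ).sub_const τ)))
      have hFd : HasDerivAt F _ τ := ((hAd.mul hφ'd).add (hPd.mul hφd)).sub hRd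
      have hV := hFd.deriv
      rw [hderiv0] at hV
      simp only [id_eq, Pi.mul_apply, Pi.add_apply, Pi.sub_apply] at hV
      push_cast at hV ⊢
      linear_combination -hV - 3 * h1
    · -- away from τ = c, divide the identity (E3) - τ(E1) = (τ-c)(E2) by (τ-c)
      have hne : τ - c ≠ 0 := sub_ne_zero.mpr hτc
      have key : (τ - c) * ((-τ^3*(τ-c) * deriv (deriv φ) τ
          + ((2*(m:ℝ)*τ - b)*τ*(τ-c) - ((m:ℝ)+1)*τ^3) * deriv φ τ
          + (2*(2*(m:ℝ)-1)*τ^2 - b*τ + 2*(τ-c)*(b - (2*(m:ℝ)-1)*τ)) * φ τ) - e*τ) = 0 := by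
        linear_combination h3 - τ * h1
      have := mul_eq_zero.mp key
      rcases this with h | h
      · exact absurd h hne
      · linarith [h]
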